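/- For any cyclic permutation (i,j,k) of (1,2,3) and all a, b ∈ A one has (a e_i)·(b e_j) = a* b* e_k = −((b e_j)·(a e_i)). Consequently the multiplication · coincides with Yang's multiplication ∘ on all of E. -/

import Mathlib

open LaurentPolynomial

/-- `A = ℤ[z, z⁻¹]`, the Laurent polynomial ring over the integers. -/
abbrev A : Type := LaurentPolynomial ℤ

/-- The conjugation `f(z) ↦ f(z⁻¹)` on `A`. -/
noncomputable def conj : A →+* A := (LaurentPolynomial.invert (R := ℤ)).toRingEquiv.toRingHom

/-- The fixed subring `A₀ = {f ∈ A | f* = f}`. -/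
noncomputable def A0 : Subring A := RingHom.eqLocus conj (RingHom.id A)

/-- `E = A⁴`. -/
abbrev E : Type := Fin 4 → A

/-- The norm `N(x) = ∑ₖ xₖ xₖ*`. -/
noncomputable def N (x : E) : A := ∑ k, x k * conj (x k)

/-- The standard `A`-basis vectors of `E = A⁴`. -/
noncomputable def e (k : Fin 4) : E := Pi.single k 1

/-- Yang's multiplication `x ∘ y = (p, q, r, s)`. -/
noncomputable def yang (x y : E) : E :=
  ![x 0 * y 0 - x 1 * conj (y 1) - x 2 * conj (y 2) - x 3 * conj (y 3),
    x 0 * y 1 + x 1 * conj (y 0) + conj (x 2) * conj (y 3) - conj (x 3) * conj (y 2),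
    x 0 * y 2 - conj (x 1) * conj (y 3) + x 2 * conj (y 0) + conj (x 3) * conj (y 1),
    x 0 * y 3 + conj (x 1) * conj (y 2) - conj (x 2) * conj (y 1) + x 3 * conj (y 0)]

noncomputable def zz : A := T 1
noncomputable def zi : A := T (-1)

lemma conj_conj (a : A) : conj (conj a) = a := involutive_invert a
lemma conj_zz : conj zz = zi := by simp [conj, zz, zi]
lemma conj_zi : conj zi = zz := by simp [conj, zz, zi]
lemma zz_mul_zi : zz * zi = 1 := by rw [zz, zi, ← T_add]; norm_num
lemma twoA_ne_zero : (2 : A) ≠ 0 := by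
  have h := (Polynomial.toLaurent_ne_zero (f := (2 : Polynomial ℤ))).mpr two_ne_zero
  rwa [map_ofNat] at h

noncomputable def Bf (x y : E) : A := ∑ k, (x k * conj (y k) + conj (x k) * y k)

lemma NB (x y : E) : N (x + y) = N x + N y + Bf x y := by
  simp [N, Bf, Fin.sum_univ_four, map_add]; ring

lemma Bf_symm (x y : E) : Bf x y = Bf y x := by
  simp [Bf, Fin.sum_univ_four]; ring

lemma Bf_add_left (x y w : E) : Bf (x + y) w = Bf x w + Bf y w := by
  simp [Bf, Fin.sum_univ_four, map_add]; ring

lemma Bf_add_right (x y w : E) : Bf x (y + w) = Bf x y + Bf x w := by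
  simp [Bf, Fin.sum_univ_four, map_add]; ring

lemma Bf_neg_left (x w : E) : Bf (-x) w = -Bf x w := by
  simp [Bf, Fin.sum_univ_four, map_neg]; ring

lemma Bf_sub_left (x y w : E) : Bf (x - y) w = Bf x w - Bf y w := by
  simp [Bf, Fin.sum_univ_four, map_sub]; ring

lemma conj_Bf (x y : E) : conj (Bf x y) = Bf x y := by
  simp [Bf, Fin.sum_univ_four, map_add, map_mul, conj_conj]; ring

lemma Bf_smul_left (a : A) (h : conj a = a) (x w : E) : Bf (a • x) w = a * Bf x w := by
  simp [Bf, Fin.sum_univ_four, map_mul, h]; ring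

lemma Bf_e (x : E) (l : Fin 4) : Bf x (e l) = x l + conj (x l) := by
  fin_cases l <;> simp [Bf, e, Fin.sum_univ_four, Pi.single_apply]

lemma Bf_Ze (x : E) (l : Fin 4) : Bf x (zz • e l) = x l * zi + conj (x l) * zz := by
  fin_cases l <;> simp [Bf, e, zz, zi, Fin.sum_univ_four, Pi.single_apply, conj] <;> ring

lemma nondeg (x : E) (h : ∀ u : E, Bf x u = 0) : x = 0 := by
  funext l
  have h1 := h (e l); rw [Bf_e] at h1
  have h2 := h (zz • e l); rw [Bf_Ze] at h2
  have h3 : conj (x l) = -x l := by linear_combination h1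
  rw [h3] at h2
  have h4 : x l * (T (-1) - T 1) = 0 := by rw [show (T (-1) : A) = zi from rfl, show (T 1 : A) = zz from rfl]; linear_combination h2
  rcases mul_eq_zero.mp h4 with h5 | h5
  · simpa using h5
  · exfalso
    have h6 := sub_eq_zero.mp h5
    have := congrArg (fun f => (LaurentPolynomial.invert f).coeff 1) h6
    simp at this

lemma eq_of_Bf (p q : E) (h : ∀ u, Bf p u = Bf q u) : p = q := by
  have : p - q = 0 := nondeg _ (fun u => by rw [Bf_sub_left, h, sub_self])
  exact sub_eq_zero.mp this

-- yang computational lemmas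
lemma Y_e0_l (y : E) : yang (e 0) y = y := by
  funext k; fin_cases k <;> simp [yang, e, Pi.single_apply]

lemma Y_e0_r (x : E) : yang x (e 0) = x := by
  funext k; fin_cases k <;> simp [yang, e, Pi.single_apply]

lemma Y_smul0 (a : A) (y : E) : yang (a • e 0) y = a • y := by
  funext k; fin_cases k <;> simp [yang, e, Pi.single_apply]

lemma Yadd_r (x y y' : E) : yang x (y + y') = yang x y + yang x y' := by
  funext k; fin_cases k <;> simp [yang, map_add] <;> ring

lemma Yadd_l (x x' y : E) : yang (x + x') y = yang x y + yang x' y := by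
  funext k; fin_cases k <;> simp [yang, map_add] <;> ring

lemma YsemiR (x : E) (hx : x 0 = 0) (a : A) (y : E) : yang x (a • y) = conj a • yang x y := by
  funext k; fin_cases k <;> simp [yang, hx, map_mul] <;> ring

lemma Y11 : yang (e 1) (e 1) = -e 0 := by funext k; fin_cases k <;> simp [yang, e, Pi.single_apply]
lemma Y22 : yang (e 2) (e 2) = -e 0 := by funext k; fin_cases k <;> simp [yang, e, Pi.single_apply]
lemma Y33 : yang (e 3) (e 3) = -e 0 := by funext k; fin_cases k <;> simp [yang, e, Pi.single_apply]
lemma Y12 : yang (e 1) (e 2) = e 3 := by funext k; fin_cases k <;> simp [yang, e, Pi.single_apply]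
lemma Y21 : yang (e 2) (e 1) = -e 3 := by funext k; fin_cases k <;> simp [yang, e, Pi.single_apply]
lemma Y23 : yang (e 2) (e 3) = e 1 := by funext k; fin_cases k <;> simp [yang, e, Pi.single_apply]
lemma Y32 : yang (e 3) (e 2) = -e 1 := by funext k; fin_cases k <;> simp [yang, e, Pi.single_apply]
lemma Y31 : yang (e 3) (e 1) = e 2 := by funext k; fin_cases k <;> simp [yang, e, Pi.single_apply]
lemma Y13 : yang (e 1) (e 3) = -e 2 := by funext k; fin_cases k <;> simp [yang, e, Pi.single_apply]

-- Ycomm lemmas: for i ≠ j in {1,2,3}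
lemma Yc12 (b : A) (y : E) : yang (b • e 1) (yang (e 2) y) = -(yang (e 2) (yang (b • e 1) y)) := by
  funext k; fin_cases k <;>
    simp [yang, e, Pi.single_apply, map_mul, map_add, map_sub, map_neg, conj_conj] <;> ring
lemma Yc13 (b : A) (y : E) : yang (b • e 1) (yang (e 3) y) = -(yang (e 3) (yang (b • e 1) y)) := by
  funext k; fin_cases k <;>
    simp [yang, e, Pi.single_apply, map_mul, map_add, map_sub, map_neg, conj_conj] <;> ring
lemma Yc21 (b : A) (y : E) : yang (b • e 2) (yang (e 1) y) = -(yang (e 1) (yang (b • e 2) y)) := by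
  funext k; fin_cases k <;>
    simp [yang, e, Pi.single_apply, map_mul, map_add, map_sub, map_neg, conj_conj] <;> ring
lemma Yc23 (b : A) (y : E) : yang (b • e 2) (yang (e 3) y) = -(yang (e 3) (yang (b • e 2) y)) := by
  funext k; fin_cases k <;>
    simp [yang, e, Pi.single_apply, map_mul, map_add, map_sub, map_neg, conj_conj] <;> ring
lemma Yc31 (b : A) (y : E) : yang (b • e 3) (yang (e 1) y) = -(yang (e 1) (yang (b • e 3) y)) := by
  funext k; fin_cases k <;>
    simp [yang, e, Pi.single_apply, map_mul, map_add, map_sub, map_neg, conj_conj] <;> ring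
lemma Yc32 (b : A) (y : E) : yang (b • e 3) (yang (e 2) y) = -(yang (e 2) (yang (b • e 3) y)) := by
  funext k; fin_cases k <;>
    simp [yang, e, Pi.single_apply, map_mul, map_add, map_sub, map_neg, conj_conj] <;> ring

-- final-part computations
lemma Yf12 (a b : A) : yang (a • e 1) (b • e 2) = (conj a * conj b) • e 3 := by
  funext k; fin_cases k <;> simp [yang, e, Pi.single_apply, map_mul] <;> ring
lemma Yf23 (a b : A) : yang (a • e 2) (b • e 3) = (conj a * conj b) • e 1 := by
  funext k; fin_cases k <;> simp [yang, e, Pi.single_apply, map_mul] <;> ring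
lemma Yf31 (a b : A) : yang (a • e 3) (b • e 1) = (conj a * conj b) • e 2 := by
  funext k; fin_cases k <;> simp [yang, e, Pi.single_apply, map_mul] <;> ring
lemma Yf21 (a b : A) : yang (b • e 2) (a • e 1) = -((conj a * conj b) • e 3) := by
  funext k; fin_cases k <;> simp [yang, e, Pi.single_apply, map_mul] <;> ring
lemma Yf32 (a b : A) : yang (b • e 3) (a • e 2) = -((conj a * conj b) • e 1) := by
  funext k; fin_cases k <;> simp [yang, e, Pi.single_apply, map_mul] <;> ring
lemma Yf13 (a b : A) : yang (b • e 1) (a • e 3) = -((conj a * conj b) • e 2) := by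
  funext k; fin_cases k <;> simp [yang, e, Pi.single_apply, map_mul] <;> ring

lemma smul_e (a : A) (l : Fin 4) : a • e l = Pi.single l a := by
  funext k; by_cases h : k = l <;> simp [e, Pi.single_apply, h]

lemma e_decomp (x : E) : x = x 0 • e 0 + x 1 • e 1 + x 2 • e 2 + x 3 • e 3 := by
  funext k; fin_cases k <;> simp [e, Pi.single_apply]

lemma smul_zz_zi (y : E) : zz • zi • y = y := by
  rw [smul_smul, zz_mul_zi, one_smul]
lemma smul_zi_zz (y : E) : zi • zz • y = y := by
  rw [smul_smul, mul_comm, zz_mul_zi, one_smul]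

-- the reach/agreement lemma
lemma agree_aux (f g : E → E)
    (hfadd : ∀ p q, f (p + q) = f p + f q) (hgadd : ∀ p q, g (p + q) = g p + g q)
    (hfz : ∀ y, f (zz • y) = zi • f y) (hgz : ∀ y, g (zz • y) = zi • g y)
    (hseed : ∀ l, f (e l) = g (e l)) : ∀ y, f y = g y := by
  have hf0 : f 0 = 0 := by have := hfadd 0 0; simpa using this
  have hg0 : g 0 = 0 := by have := hgadd 0 0; simpa using this
  have hfneg : ∀ p, f (-p) = -f p := by
    intro p; have h := hfadd p (-p); simp [hf0] at h
    exact eq_neg_of_add_eq_zero_right h.symm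
  have hgneg : ∀ p, g (-p) = -g p := by
    intro p; have h := hgadd p (-p); simp [hg0] at h
    exact eq_neg_of_add_eq_zero_right h.symm
  -- downward z-closure
  have hfz' : ∀ y, f (zi • y) = zz • f y := by
    intro y
    have h := hfz (zi • y); rw [smul_zz_zi] at h
    rw [h, smul_smul, zz_mul_zi, one_smul]
  have hgz' : ∀ y, g (zi • y) = zz • g y := by
    intro y
    have h := hgz (zi • y); rw [smul_zz_zi] at h
    rw [h, smul_smul, zz_mul_zi, one_smul]
  set S : AddSubgroup E :=
    { carrier := {y | f y = g y}
      zero_mem' := by simp [hf0, hg0]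
      add_mem' := by
        intro p q hp hq
        show f (p + q) = g (p + q)
        rw [hfadd, hgadd, hp, hq]
      neg_mem' := by
        intro p hp
        show f (-p) = g (-p)
        rw [hfneg, hgneg, hp] } with hS
  have hmemz : ∀ y ∈ S, zz • y ∈ S := by
    intro y hy
    show f (zz • y) = g (zz • y)
    rw [hfz, hgz, hy]
  have hmemz' : ∀ y ∈ S, zi • y ∈ S := by
    intro y hy
    show f (zi • y) = g (zi • y)
    rw [hfz', hgz', hy]
  have hT : ∀ (n : ℤ) (l : Fin 4), (T n : A) • e l ∈ S := by
    intro n l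
    induction n using Int.induction_on with
    | zero => rw [T_zero, one_smul]; exact hseed l
    | succ m ih =>
        have h2 := hmemz _ ih
        rwa [smul_smul, zz, ← T_add, add_comm] at h2
    | pred m ih =>
        have h2 := hmemz' _ ih
        rwa [smul_smul, zi, ← T_add, show -1 + -(m:ℤ) = -(m:ℤ) - 1 by ring] at h2
  have hsingle : ∀ (l : Fin 4) (a : A), Pi.single l a ∈ S := by
    intro l a
    induction a using LaurentPolynomial.induction_on' with
    | add p q hp hq => rw [Pi.single_add]; exact S.add_mem hp hq
    | C_mul_T n c =>
        have hc : (C c * T n : A) = c • (T n : A) := by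
          rw [zsmul_eq_mul]
          congr 1
        rw [hc, Pi.single_smul]
        exact S.zsmul_mem (by rw [← smul_e]; exact hT n l) c
  intro y
  have hy : y ∈ S := by
    have hd := e_decomp y
    rw [hd]
    refine S.add_mem (S.add_mem (S.add_mem ?_ ?_) ?_) ?_ <;>
      rw [smul_e] <;> exact hsingle _ _
  exact hy

section MulLayer
variable (mul : E →ₗ[A0] E →ₗ[A0] E)
  (hL : ∀ x y : E, N (mul x y) = N x * N y)
  (hid : ∀ x : E, mul (e 0) x = x ∧ mul x (e 0) = x)
  (hA : ∀ (a : A) (y : E), mul (a • e 0) y = a • y)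

lemma madd_l (x u y : E) : mul (x + u) y = mul x y + mul u y := by
  rw [map_add, LinearMap.add_apply]

include hL

lemma P1 (x y w : E) : Bf (mul x y) (mul x w) = N x * Bf y w := by
  have key := hL x (y + w)
  rw [map_add, NB, NB] at key
  linear_combination key - hL x y - hL x w

lemma P2 (x u y : E) : Bf (mul x y) (mul u y) = Bf x u * N y := by
  have key := hL (x + u) y
  rw [madd_l, NB, NB] at key
  linear_combination key - hL x y - hL u y

lemma P3 (x y u w : E) :
    Bf (mul x y) (mul u w) + Bf (mul x w) (mul u y) = Bf x u * Bf y w := by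
  have key := hL (x + u) (y + w)
  rw [madd_l, map_add, map_add, NB, NB, NB, NB, NB, Bf_add_left, Bf_add_right, Bf_add_right]
    at key
  linear_combination key - hL x y - hL x w - hL u y - hL u w
    - P1 mul hL x y w - P1 mul hL u y w - P2 mul hL x u y - P2 mul hL x u w

include hid

lemma AdjL (x y w : E) :
    Bf (mul x y) w + Bf (mul x w) y = Bf x (e 0) * Bf y w := by
  have h := P3 mul hL x y (e 0) w
  rwa [(hid w).1, (hid y).1] at h

lemma AdjR (x y u : E) :
    Bf (mul x y) u + Bf x (mul u y) = Bf x u * Bf y (e 0) := by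
  have h := P3 mul hL x y u (e 0)
  rwa [(hid u).2, (hid x).2] at h

lemma master (x w y : E) :
    mul x (mul w y) + mul w (mul x y)
      = Bf x (e 0) • mul w y + Bf w (e 0) • mul x y - Bf x w • y := by
  apply eq_of_Bf
  intro u
  rw [Bf_add_left, Bf_sub_left, Bf_add_left,
    Bf_smul_left _ (conj_Bf x (e 0)), Bf_smul_left _ (conj_Bf w (e 0)),
    Bf_smul_left _ (conj_Bf x w)]
  have h1 := AdjL mul hL hid x (mul w y) u
  have h2 := AdjL mul hL hid w (mul x y) u
  have h3 := P3 mul hL x u w y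
  have h4 := Bf_symm (mul w u) (mul x y)
  have h5 := Bf_symm u y
  linear_combination h1 + h2 - h3 - h4 - Bf x w * h5

lemma squares (j : Fin 4) (hj : j ≠ 0) : mul (e j) (e j) = -e 0 := by
  have hejj : (e j) j = 1 := Pi.single_eq_same j 1
  have hej0 : (e j) 0 = 0 := Pi.single_eq_of_ne (Ne.symm hj) 1
  have hBjj : Bf (e j) (e j) = 2 := by rw [Bf_e, hejj, map_one]; norm_num
  have hBj0 : Bf (e j) (e 0) = 0 := by rw [Bf_e, hej0, map_zero, add_zero]
  have h1 : ∀ u, Bf (mul u (e j)) (e j) = Bf u (e 0) := by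
    intro u
    have h := AdjL mul hL hid u (e j) (e j)
    rw [hBjj] at h
    apply mul_left_cancel₀ twoA_ne_zero
    linear_combination h
  apply eq_of_Bf
  intro u
  have h3 := AdjR mul hL hid (e j) (e j) u
  rw [hBj0, mul_zero] at h3
  have h4 := Bf_symm (e j) (mul u (e j))
  have h5 := h1 u
  have h6 : Bf (-e 0) u = -Bf (e 0) u := Bf_neg_left (e 0) u
  have h7 := Bf_symm (e 0) u
  linear_combination h3 - h4 - h5 - h6 + h7
end MulLayer

section MulLayer2
variable (mul : E →ₗ[A0] E →ₗ[A0] E)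
  (hL : ∀ x y : E, N (mul x y) = N x * N y)
  (hid : ∀ x : E, mul (e 0) x = x ∧ mul x (e 0) = x)
  (hA : ∀ (a : A) (y : E), mul (a • e 0) y = a • y)
include hL hid hA

lemma zrule (w : E) (hw0 : w 0 = 0) (y : E) : mul w (zz • y) = zi • mul w y := by
  have hm := master mul hL hid (zz • e 0) w y
  rw [hA zz (mul w y), hA zz y] at hm
  have hb1 : Bf (zz • e 0) (e 0) = zi + zz := by
    rw [Bf_symm, Bf_Ze]
    simp [e, Pi.single_eq_same, map_one]
  have hb2 : Bf w (e 0) = 0 := by rw [Bf_e, hw0, map_zero, add_zero]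
  have hb3 : Bf (zz • e 0) w = 0 := by
    rw [Bf_symm, Bf_Ze, hw0, map_zero, zero_mul, zero_mul, add_zero]
  rw [hb1, hb2, hb3, zero_smul, zero_smul, add_zero, sub_zero, add_smul] at hm
  have hm2 : zz • mul w y + mul w (zz • y) = zz • mul w y + zi • mul w y := by
    rw [hm]; abel
  exact add_left_cancel hm2

lemma lcomm (u : E) (hu0 : u 0 = 0) (j : Fin 4) (hj0 : j ≠ 0) (huj : u j = 0) (y : E) :
    mul u (mul (e j) y) = -mul (e j) (mul u y) := by
  have hm := master mul hL hid (e j) u y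
  have hb1 : Bf (e j) (e 0) = 0 := by
    rw [Bf_e]; simp [e, Pi.single_eq_of_ne (Ne.symm hj0)]
  have hb2 : Bf u (e 0) = 0 := by rw [Bf_e, hu0, map_zero, add_zero]
  have hb3 : Bf (e j) u = 0 := by rw [Bf_symm, Bf_e, huj, map_zero, add_zero]
  rw [hb1, hb2, hb3] at hm
  simp only [zero_smul, add_zero, zero_add, zero_sub, sub_zero, neg_zero] at hm
  exact eq_neg_of_add_eq_zero_right hm

lemma step2_generic (i j1 j2 : Fin 4) (a : A)
    (hi0 : i ≠ 0) (hj10 : j1 ≠ 0) (hj20 : j2 ≠ 0) (hij1 : j1 ≠ i) (hij2 : j2 ≠ i)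
    (h1 : ∀ y, mul (e j1) y = yang (e j1) y)
    (h2 : ∀ y, mul (e j2) y = yang (e j2) y)
    (hcomm1 : ∀ (b : A) (y : E), yang (b • e i) (yang (e j1) y) = -(yang (e j1) (yang (b • e i) y)))
    (hcomm2 : ∀ (b : A) (y : E), yang (b • e i) (yang (e j2) y) = -(yang (e j2) (yang (b • e i) y)))
    (hval : yang (e j1) (e j2) = e i)
    (hcover : ∀ l : Fin 4, l = 0 ∨ l = i ∨ l = j1 ∨ l = j2) :
    ∀ y, mul (a • e i) y = yang (a • e i) y := by
  set u : E := a • e i with hu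
  have hu0 : u 0 = 0 := by
    rw [hu]; simp [e, Pi.single_eq_of_ne (Ne.symm hi0)]
  have huj1 : u j1 = 0 := by
    rw [hu]; simp [e, Pi.single_eq_of_ne hij1]
  have huj2 : u j2 = 0 := by
    rw [hu]; simp [e, Pi.single_eq_of_ne hij2]
  -- closure step
  have clos : ∀ (j : Fin 4), j ≠ 0 → u j = 0 →
      (∀ y, mul (e j) y = yang (e j) y) →
      (∀ (b : A) (y : E), yang (b • e i) (yang (e j) y) = -(yang (e j) (yang (b • e i) y))) →
      ∀ y, mul u y = yang u y → mul u (yang (e j) y) = yang u (yang (e j) y) := by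
    intro j hj0 huj hstep hcomm y hy
    calc mul u (yang (e j) y) = mul u (mul (e j) y) := by rw [hstep]
    _ = -mul (e j) (mul u y) := lcomm mul hL hid hA u hu0 j hj0 huj y
    _ = -mul (e j) (yang u y) := by rw [hy]
    _ = -yang (e j) (yang u y) := by rw [hstep]
    _ = yang u (yang (e j) y) := by rw [hu, hcomm a y]
  -- seeds
  have seed0 : mul u (e 0) = yang u (e 0) := by rw [(hid u).2, Y_e0_r]
  have seedj2 : mul u (e j2) = yang u (e j2) := by
    have h := clos j2 hj20 huj2 h2 hcomm2 (e 0) seed0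
    rwa [Y_e0_r] at h
  have seedj1 : mul u (e j1) = yang u (e j1) := by
    have h := clos j1 hj10 huj1 h1 hcomm1 (e 0) seed0
    rwa [Y_e0_r] at h
  have seedi : mul u (e i) = yang u (e i) := by
    have h := clos j1 hj10 huj1 h1 hcomm1 (e j2) seedj2
    rwa [hval] at h
  -- agreement
  apply agree_aux (fun y => mul u y) (fun y => yang u y)
  · intro p q; rw [map_add]
  · intro p q; exact Yadd_r u p q
  · intro y; exact zrule mul hL hid hA u hu0 y
  · intro y
    have := YsemiR u hu0 zz y
    rwa [conj_zz] at this
  · intro l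
    -- l ∈ {0, i, j1, j2} = all of Fin 4
    rcases hcover l with h | h | h | h <;> subst h
    · exact seed0
    · exact seedi
    · exact seedj1
    · exact seedj2
end MulLayer2

/-- `(i,j,k)` is a cyclic permutation of `(1,2,3)`. -/
def Cyc (i j k : Fin 4) : Prop :=
  (i, j, k) = (1, 2, 3) ∨ (i, j, k) = (2, 3, 1) ∨ (i, j, k) = (3, 1, 2)

/-- Lemma 4.8: for any cyclic permutation `(i,j,k)` of `(1,2,3)` and all
`a, b ∈ A`, `(a eᵢ)·(b eⱼ) = a* b* eₖ = −((b eⱼ)·(a eᵢ))`.  Consequently the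
multiplication `·` coincides with Yang's multiplication `∘` on all of `E`. -/
theorem coincides_with_yang (mul : E →ₗ[A0] E →ₗ[A0] E)
    (hL : ∀ x y : E, N (mul x y) = N x * N y)
    (hid : ∀ x : E, mul (e 0) x = x ∧ mul x (e 0) = x)
    (hA : ∀ (a : A) (y : E), mul (a • e 0) y = a • y)
    (hq : ∀ i j k : Fin 4, Cyc i j k →
      mul (e i) (e j) = e k ∧ mul (e j) (e i) = -e k) :
    (∀ i j k : Fin 4, Cyc i j k → ∀ a b : A,
      mul (a • e i) (b • e j) = (conj a * conj b) • e k ∧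
      mul (a • e i) (b • e j) = -mul (b • e j) (a • e i)) ∧
    ∀ x y : E, mul x y = yang x y := by
  have hq123 := hq 1 2 3 (Or.inl rfl)
  have hq231 := hq 2 3 1 (Or.inr (Or.inl rfl))
  have hq312 := hq 3 1 2 (Or.inr (Or.inr rfl))
  have hsq1 : mul (e 1) (e 1) = -e 0 := squares mul hL hid 1 (by decide)
  have hsq2 : mul (e 2) (e 2) = -e 0 := squares mul hL hid 2 (by decide)
  have hsq3 : mul (e 3) (e 3) = -e 0 := squares mul hL hid 3 (by decide)
  have he10 : (e 1 : E) 0 = 0 := by simp [e, Pi.single_apply]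
  have he20 : (e 2 : E) 0 = 0 := by simp [e, Pi.single_apply]
  have he30 : (e 3 : E) 0 = 0 := by simp [e, Pi.single_apply]
  -- Step 1
  have hs1 : ∀ y, mul (e 1) y = yang (e 1) y := by
    apply agree_aux (fun y => mul (e 1) y) (fun y => yang (e 1) y)
    · intro p q; rw [map_add]
    · exact Yadd_r (e 1)
    · exact zrule mul hL hid hA (e 1) he10
    · intro y; have h := YsemiR (e 1) he10 zz y; rwa [conj_zz] at h
    · intro l; fin_cases l
      · exact ((hid (e 1)).2).trans (Y_e0_r (e 1)).symm
      · exact (hsq1).trans (Y11).symm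
      · exact (hq123.1).trans (Y12).symm
      · exact (hq312.2).trans (Y13).symm
  have hs2 : ∀ y, mul (e 2) y = yang (e 2) y := by
    apply agree_aux (fun y => mul (e 2) y) (fun y => yang (e 2) y)
    · intro p q; rw [map_add]
    · exact Yadd_r (e 2)
    · exact zrule mul hL hid hA (e 2) he20
    · intro y; have h := YsemiR (e 2) he20 zz y; rwa [conj_zz] at h
    · intro l; fin_cases l
      · exact ((hid (e 2)).2).trans (Y_e0_r (e 2)).symm
      · exact (hq123.2).trans (Y21).symm
      · exact (hsq2).trans (Y22).symm
      · exact (hq231.1).trans (Y23).symm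
  have hs3 : ∀ y, mul (e 3) y = yang (e 3) y := by
    apply agree_aux (fun y => mul (e 3) y) (fun y => yang (e 3) y)
    · intro p q; rw [map_add]
    · exact Yadd_r (e 3)
    · exact zrule mul hL hid hA (e 3) he30
    · intro y; have h := YsemiR (e 3) he30 zz y; rwa [conj_zz] at h
    · intro l; fin_cases l
      · exact ((hid (e 3)).2).trans (Y_e0_r (e 3)).symm
      · exact (hq312.1).trans (Y31).symm
      · exact (hq231.2).trans (Y32).symm
      · exact (hsq3).trans (Y33).symm
  -- Step 2
  have ht1 : ∀ (a : A) (y : E), mul (a • e 1) y = yang (a • e 1) y := fun a =>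
    step2_generic mul hL hid hA 1 2 3 a (by decide) (by decide) (by decide) (by decide)
      (by decide) hs2 hs3 Yc12 Yc13 Y23 (by decide)
  have ht2 : ∀ (a : A) (y : E), mul (a • e 2) y = yang (a • e 2) y := fun a =>
    step2_generic mul hL hid hA 2 3 1 a (by decide) (by decide) (by decide) (by decide)
      (by decide) hs3 hs1 Yc23 Yc21 Y31 (by decide)
  have ht3 : ∀ (a : A) (y : E), mul (a • e 3) y = yang (a • e 3) y := fun a =>
    step2_generic mul hL hid hA 3 1 2 a (by decide) (by decide) (by decide) (by decide)
      (by decide) hs1 hs2 Yc31 Yc32 Y12 (by decide)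
  -- main equality
  have hmain : ∀ x y : E, mul x y = yang x y := by
    intro x y
    have hd := e_decomp x
    calc mul x y = mul (x 0 • e 0 + x 1 • e 1 + x 2 • e 2 + x 3 • e 3) y := by rw [← hd]
    _ = mul (x 0 • e 0) y + mul (x 1 • e 1) y + mul (x 2 • e 2) y + mul (x 3 • e 3) y := by
        rw [madd_l, madd_l, madd_l]
    _ = yang (x 0 • e 0) y + yang (x 1 • e 1) y + yang (x 2 • e 2) y + yang (x 3 • e 3) y := by
        rw [hA, Y_smul0, ht1, ht2, ht3]
    _ = yang (x 0 • e 0 + x 1 • e 1 + x 2 • e 2 + x 3 • e 3) y := by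
        rw [Yadd_l, Yadd_l, Yadd_l]
    _ = yang x y := by rw [← hd]
  refine ⟨?_, hmain⟩
  intro i j k hc a b
  rcases hc with h | h | h
  · obtain ⟨hi, hj, hk⟩ : i = 1 ∧ j = 2 ∧ k = 3 := by simpa [Prod.ext_iff] using h
    subst hi; subst hj; subst hk
    exact ⟨by rw [hmain]; exact Yf12 a b,
      by rw [hmain, hmain, Yf12, Yf21, neg_neg]⟩
  · obtain ⟨hi, hj, hk⟩ : i = 2 ∧ j = 3 ∧ k = 1 := by simpa [Prod.ext_iff] using h
    subst hi; subst hj; subst hk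
    exact ⟨by rw [hmain]; exact Yf23 a b,
      by rw [hmain, hmain, Yf23, Yf32, neg_neg]⟩
  · obtain ⟨hi, hj, hk⟩ : i = 3 ∧ j = 1 ∧ k = 2 := by simpa [Prod.ext_iff] using h
    subst hi; subst hj; subst hk
    exact ⟨by rw [hmain]; exact Yf31 a b,
      by rw [hmain, hmain, Yf31, Yf13, neg_neg]⟩
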